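/- Two elements w, v ∈ S = K ≀_Γ Sym(Γ) are conjugate in S if and only if L(w) = L(v) and |C(L,w)| = |C(L,v)| for all loads L ∈ L(w); that is, they have, for each load, the same number of wreath cycles of that load in their disjoint wreath cycle decompositions. -/

import Mathlib

set_option linter.unusedSectionVars false

/-- The wreath product `K ≀_Γ Sym(Γ)` (with right-action conventions from the paper):
multiplication `(f,h)(e,g) = (f · e^{h⁻¹}, hg)` where `[γ](f·e^{h⁻¹}) = [γ]f * [γ^h]e`. -/
structure Wr (K : Type*) (Γ : Type*) where
  base : Γ → K
  top : Equiv.Perm Γ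

namespace Wr

variable {K Γ : Type*} [Group K]

theorem ext' {w v : Wr K Γ} (h1 : w.base = v.base) (h2 : w.top = v.top) : w = v := by
  cases w; cases v; cases h1; cases h2; rfl

instance : Group (Wr K Γ) where
  mul w v := ⟨fun γ => w.base γ * v.base (w.top γ), w.top.trans v.top⟩
  one := ⟨fun _ => 1, 1⟩
  inv w := ⟨fun γ => (w.base (w.top⁻¹ γ))⁻¹, w.top⁻¹⟩
  mul_assoc a b c := ext' (funext fun γ => mul_assoc _ _ _) (Equiv.trans_assoc _ _ _)
  one_mul a := ext' (funext fun γ => one_mul _) (Equiv.refl_trans _)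
  mul_one a := ext' (funext fun γ => mul_one _) (Equiv.trans_refl _)
  inv_mul_cancel a := ext' (funext fun γ => inv_mul_cancel _) (Equiv.symm_trans_self _)

/-- The support of a permutation, as a set. -/
def psupp (h : Equiv.Perm Γ) : Set Γ := {γ | h γ ≠ γ}

/-- The territory of a wreath product element. -/
def terr (w : Wr K Γ) : Set Γ := psupp w.top ∪ {γ | w.base γ ≠ 1}

/-- Wreath cycles: either trivial top and a singleton territory, or the top is a
single nontrivial cycle and the territory equals its support. -/
def IsWreathCycle (w : Wr K Γ) : Prop :=
  (w.top = 1 ∧ ∃ γ₀, terr w = {γ₀}) ∨ (w.top.IsCycle ∧ terr w = psupp w.top)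

/-- The yade of `w` at `γ`: the ordered product `∏_{i=0}^{|h|-1} [γ^{h^i}]f`. -/
noncomputable def yade (w : Wr K Γ) (γ : Γ) : K :=
  ((List.range (orderOf w.top)).map fun i => w.base ((w.top ^ i) γ)).prod

end Wr

open Wr

namespace Wr

variable {K Γ : Type*} [Group K] [Fintype Γ] [DecidableEq Γ]

/-- The load of a wreath cycle: the conjugacy class of its yades over the territory,
together with the order of the top component. -/
noncomputable def load (z : Wr K Γ) : Set K × ℕ :=
  ({x | ∃ γ ∈ terr z, IsConj (yade z γ) x}, orderOf z.top)

/-- The set of wreath cycles occurring in the disjoint wreath cycle decomposition of `w`. -/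
def wCycles (w : Wr K Γ) : Set (Wr K Γ) :=
  {z | ∃ c ∈ w.top.cycleFactorsFinset,
        z = Wr.mk (fun γ => if c γ ≠ γ then w.base γ else 1) c} ∪
  {z | ∃ γ₀, w.top γ₀ = γ₀ ∧ w.base γ₀ ≠ 1 ∧
        z = Wr.mk (fun γ => if γ = γ₀ then w.base γ else 1) 1}

/-- The territory decomposition `P(w)`: for each load `L`, the set of territories of
the wreath cycles of `w` of load `L`. -/
noncomputable def tdecomp (w : Wr K Γ) : Set K × ℕ → Set (Set Γ) :=
  fun L => {Ω | ∃ z ∈ wCycles w, load z = L ∧ Ω = terr z}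

end Wr
namespace Wr

variable {K Γ : Type*} [Group K] [Fintype Γ] [DecidableEq Γ]

open Equiv Set

lemma mul_base_apply (w v : Wr K Γ) (γ : Γ) :
    (w * v).base γ = w.base γ * v.base (w.top γ) := rfl

lemma mul_top_apply (w v : Wr K Γ) (γ : Γ) : (w * v).top γ = v.top (w.top γ) := rfl

lemma isConj_iff' (w v : Wr K Γ) : IsConj w v ↔ ∃ (σ : Equiv.Perm Γ) (g : Γ → K),
    (∀ γ, w.top (σ γ) = σ (v.top γ)) ∧ ∀ γ, g γ * w.base (σ γ) = v.base γ * g (v.top γ) := by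
  rw [_root_.isConj_iff]
  constructor
  · rintro ⟨c, hc⟩
    have hc' : c * w = v * c := by rw [← hc]; group
    refine ⟨c.top, c.base, fun γ => ?_, fun γ => ?_⟩
    · have h := congrArg (fun x => Wr.top x γ) hc'
      simpa [mul_top_apply] using h
    · have h := congrArg (fun x => Wr.base x γ) hc'
      simpa [mul_base_apply] using h
  · rintro ⟨σ, g, h1, h2⟩
    refine ⟨⟨g, σ⟩, mul_inv_eq_iff_eq_mul.mpr ?_⟩
    refine ext' (funext fun γ => ?_) (Equiv.ext fun γ => ?_)
    · exact h2 γ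
    · exact h1 γ

/-- partial yade products -/
noncomputable def pp (z : Wr K Γ) (γ : Γ) (i : ℕ) : K :=
  ((List.range i).map fun j => z.base ((z.top ^ j) γ)).prod

lemma pp_zero (z : Wr K Γ) (γ : Γ) : pp z γ 0 = 1 := rfl

lemma pp_succ (z : Wr K Γ) (γ : Γ) (i : ℕ) :
    pp z γ (i + 1) = pp z γ i * z.base ((z.top ^ i) γ) := by
  simp [pp, List.range_succ]

lemma yade_eq_pp (z : Wr K Γ) (γ : Γ) : yade z γ = pp z γ (orderOf z.top) := rfl

lemma top_pow_succ (z : Wr K Γ) (i : ℕ) (γ : Γ) :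
    (z.top ^ (i + 1)) γ = z.top ((z.top ^ i) γ) := by
  rw [pow_succ']; rfl

lemma top_pow_succ' (z : Wr K Γ) (i : ℕ) (γ : Γ) :
    (z.top ^ (i + 1)) γ = (z.top ^ i) (z.top γ) := by
  rw [pow_succ]; rfl

lemma top_pow_orderOf (z : Wr K Γ) (γ : Γ) : (z.top ^ orderOf z.top) γ = γ := by
  rw [pow_orderOf_eq_one]; rfl

lemma top_pow_mod (z : Wr K Γ) (m : ℕ) (γ : Γ) :
    (z.top ^ (m % orderOf z.top)) γ = (z.top ^ m) γ := by
  rw [pow_mod_orderOf]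

/-- rotation of the yade -/
lemma yade_top (z : Wr K Γ) (γ : Γ) :
    yade z (z.top γ) = (z.base γ)⁻¹ * yade z γ * z.base γ := by
  have key : ∀ m : ℕ, pp z (z.top γ) m
      = (z.base γ)⁻¹ * pp z γ (m + 1) := by
    intro m
    induction m with
    | zero => simp [pp, List.range_succ, pow_zero]
    | succ m ih =>
        rw [pp_succ, ih, ← top_pow_succ']
        simp [pp_succ, mul_assoc]
  have h2 := key (orderOf z.top)
  rw [yade_eq_pp, yade_eq_pp, h2, pp_succ, top_pow_orderOf]
  simp [mul_assoc]

lemma yade_pow (z : Wr K Γ) (γ : Γ) (i : ℕ) :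
    yade z ((z.top ^ i) γ) = (pp z γ i)⁻¹ * yade z γ * pp z γ i := by
  induction i with
  | zero => simp [pp_zero, pow_zero]
  | succ i ih =>
      rw [top_pow_succ, yade_top, ih, pp_succ]
      simp [mul_assoc]

lemma isConj_yade_pow (z : Wr K Γ) (γ : Γ) (i : ℕ) :
    IsConj (yade z γ) (yade z ((z.top ^ i) γ)) := by
  rw [yade_pow, isConj_iff]
  exact ⟨(pp z γ i)⁻¹, by group⟩

lemma pp_add_orderOf (z : Wr K Γ) (γ : Γ) (a : ℕ) :
    pp z γ (a + orderOf z.top) = yade z γ * pp z γ a := by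
  have key : ∀ m a : ℕ, pp z γ (a + m) = pp z γ a * pp z ((z.top ^ a) γ) m := by
    intro m
    induction m with
    | zero => simp [pp_zero]
    | succ m ih =>
        intro a
        have hp : (z.top ^ (a + m)) γ = (z.top ^ m) ((z.top ^ a) γ) := by
          rw [← Equiv.Perm.mul_apply, ← pow_add, Nat.add_comm]
        rw [← Nat.add_assoc, pp_succ, ih a, pp_succ, mul_assoc, hp]
  rw [key, ← yade_eq_pp, yade_pow]
  group

end Wr
namespace Wr

variable {K Γ : Type*} [Group K] [Fintype Γ] [DecidableEq Γ]

open Equiv Set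

lemma top_fix_of_not_mem_terr {w : Wr K Γ} {γ : Γ} (h : γ ∉ terr w) :
    w.top γ = γ ∧ w.base γ = 1 := by
  simp only [terr, psupp, Set.mem_union, Set.mem_setOf_eq, not_or, not_not] at h
  exact h

lemma wCycles_cases {w z : Wr K Γ} (hz : z ∈ wCycles w) :
    (∃ c ∈ w.top.cycleFactorsFinset,
        z = Wr.mk (fun γ => if c γ ≠ γ then w.base γ else 1) c) ∨
    (∃ γ₀, w.top γ₀ = γ₀ ∧ w.base γ₀ ≠ 1 ∧
        z = Wr.mk (fun γ => if γ = γ₀ then w.base γ else 1) 1) := hz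

lemma terr_cycle {w : Wr K Γ} {c : Equiv.Perm Γ} (_ : c ∈ w.top.cycleFactorsFinset) :
    terr (Wr.mk (fun γ => if c γ ≠ γ then w.base γ else 1) c) = ↑c.support := by
  ext γ
  by_cases h : c γ = γ <;>
    simp [terr, psupp, Equiv.Perm.mem_support, h]

lemma terr_single {w : Wr K Γ} {γ₀ : Γ} (h1 : w.base γ₀ ≠ 1) :
    terr (Wr.mk (fun γ => if γ = γ₀ then w.base γ else 1) (1 : Equiv.Perm Γ)) = {γ₀} := by
  ext γ
  by_cases h : γ = γ₀ <;>
    simp [terr, psupp, h, h1, Equiv.Perm.one_apply]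

lemma top_eq_on_terr {w z : Wr K Γ} (hz : z ∈ wCycles w) {γ : Γ} (hγ : γ ∈ terr z) :
    w.top γ = z.top γ ∧ w.base γ = z.base γ := by
  rcases wCycles_cases hz with ⟨c, hc, rfl⟩ | ⟨γ₀, hfix, hb, rfl⟩
  · rw [terr_cycle hc] at hγ
    simp only [Finset.coe_sort_coe, Finset.mem_coe, Equiv.Perm.mem_support] at hγ
    refine ⟨((Equiv.Perm.mem_cycleFactorsFinset_iff.mp hc).2 γ
      (Equiv.Perm.mem_support.mpr hγ)).symm, ?_⟩
    simp [hγ]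
  · rw [terr_single hb] at hγ
    rcases hγ with rfl
    exact ⟨hfix, by simp⟩

lemma top_mem_terr {w z : Wr K Γ} (hz : z ∈ wCycles w) {γ : Γ} (hγ : γ ∈ terr z) :
    z.top γ ∈ terr z := by
  rcases wCycles_cases hz with ⟨c, hc, rfl⟩ | ⟨γ₀, hfix, hb, rfl⟩
  · rw [terr_cycle hc] at hγ ⊢
    simpa using Equiv.Perm.apply_mem_support.mpr (by simpa using hγ)
  · rw [terr_single hb] at hγ ⊢
    rcases hγ with rfl
    simp [Equiv.Perm.one_apply]

lemma top_pow_mem_terr {w z : Wr K Γ} (hz : z ∈ wCycles w) {γ : Γ} (hγ : γ ∈ terr z)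
    (i : ℕ) : (z.top ^ i) γ ∈ terr z := by
  induction i with
  | zero => simpa using hγ
  | succ i ih => rw [top_pow_succ]; exact top_mem_terr hz ih

lemma terr_subset_terr {w z : Wr K Γ} (hz : z ∈ wCycles w) : terr z ⊆ terr w := by
  rcases wCycles_cases hz with ⟨c, hc, rfl⟩ | ⟨γ₀, hfix, hb, rfl⟩
  · rw [terr_cycle hc]
    intro γ hγ
    have := Equiv.Perm.mem_cycleFactorsFinset_support_le hc (by simpa using hγ)
    exact Or.inl (by simpa [psupp] using this)
  · rw [terr_single hb]
    rintro γ rfl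
    exact Or.inr hb

lemma exists_wCycle_of_mem_terr {w : Wr K Γ} {γ : Γ} (hγ : γ ∈ terr w) :
    ∃ z ∈ wCycles w, γ ∈ terr z := by
  rcases hγ with hγ | hγ
  · have hsupp : γ ∈ w.top.support := Equiv.Perm.mem_support.mpr hγ
    refine ⟨_, Or.inl ⟨w.top.cycleOf γ,
      Equiv.Perm.cycleOf_mem_cycleFactorsFinset_iff.mpr hsupp, rfl⟩, ?_⟩
    rw [terr_cycle (Equiv.Perm.cycleOf_mem_cycleFactorsFinset_iff.mpr hsupp)]
    simpa using Equiv.Perm.mem_support_cycleOf_iff.mpr ⟨Equiv.Perm.SameCycle.refl _ _, hsupp⟩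
  · by_cases hfix : w.top γ = γ
    · refine ⟨_, Or.inr ⟨γ, hfix, hγ, rfl⟩, ?_⟩
      rw [terr_single hγ]; rfl
    · have hsupp : γ ∈ w.top.support := Equiv.Perm.mem_support.mpr hfix
      refine ⟨_, Or.inl ⟨w.top.cycleOf γ,
        Equiv.Perm.cycleOf_mem_cycleFactorsFinset_iff.mpr hsupp, rfl⟩, ?_⟩
      rw [terr_cycle (Equiv.Perm.cycleOf_mem_cycleFactorsFinset_iff.mpr hsupp)]
      simpa using Equiv.Perm.mem_support_cycleOf_iff.mpr ⟨Equiv.Perm.SameCycle.refl _ _, hsupp⟩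

lemma terr_disjoint {w z₁ z₂ : Wr K Γ} (h1 : z₁ ∈ wCycles w) (h2 : z₂ ∈ wCycles w)
    (hne : z₁ ≠ z₂) : Disjoint (terr z₁) (terr z₂) := by
  have hsing : ∀ {z : Wr K Γ} {c : Equiv.Perm Γ} {γ₀ : Γ}, c ∈ w.top.cycleFactorsFinset →
      w.top γ₀ = γ₀ → γ₀ ∉ (c.support : Set Γ) := by
    intro z c γ₀ hc hfix hmem
    have := Equiv.Perm.mem_cycleFactorsFinset_support_le hc (by simpa using hmem)
    exact (Equiv.Perm.mem_support.mp this) hfix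
  rcases wCycles_cases h1 with ⟨c₁, hc₁, rfl⟩ | ⟨γ₁, hfix₁, hb₁, rfl⟩ <;>
    rcases wCycles_cases h2 with ⟨c₂, hc₂, rfl⟩ | ⟨γ₂, hfix₂, hb₂, rfl⟩
  · rw [terr_cycle hc₁, terr_cycle hc₂]
    have hcc : c₁ ≠ c₂ := by rintro rfl; exact hne rfl
    have := Equiv.Perm.cycleFactorsFinset_pairwise_disjoint w.top hc₁ hc₂ hcc
    exact_mod_cast Finset.disjoint_coe.mpr this.disjoint_support
  · rw [terr_cycle hc₁, terr_single hb₂]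
    exact Set.disjoint_singleton_right.mpr (hsing (z := w) hc₁ hfix₂)
  · rw [terr_single hb₁, terr_cycle hc₂]
    exact Set.disjoint_singleton_left.mpr (hsing (z := w) hc₂ hfix₁)
  · rw [terr_single hb₁, terr_single hb₂]
    refine Set.disjoint_singleton.mpr ?_
    rintro rfl; exact hne rfl

lemma wCycles_finite (w : Wr K Γ) : (wCycles w).Finite := by
  refine Set.Finite.union ?_ ?_
  · have : {z : Wr K Γ | ∃ c ∈ w.top.cycleFactorsFinset,
        z = Wr.mk (fun γ => if c γ ≠ γ then w.base γ else 1) c} ⊆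
        (fun c : Equiv.Perm Γ => Wr.mk (fun γ => if c γ ≠ γ then w.base γ else 1) c) ''
          ↑w.top.cycleFactorsFinset := by
      rintro z ⟨c, hc, rfl⟩; exact ⟨c, hc, rfl⟩
    exact Set.Finite.subset (Set.Finite.image _ (w.top.cycleFactorsFinset.finite_toSet)) this
  · have : {z : Wr K Γ | ∃ γ₀, w.top γ₀ = γ₀ ∧ w.base γ₀ ≠ 1 ∧
        z = Wr.mk (fun γ => if γ = γ₀ then w.base γ else 1) 1} ⊆
        Set.range (fun γ₀ : Γ => Wr.mk (fun γ => if γ = γ₀ then w.base γ else 1) 1) := by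
      rintro z ⟨γ₀, _, _, rfl⟩; exact ⟨γ₀, rfl⟩
    exact Set.Finite.subset (Set.finite_range _) this

lemma anchor {w z : Wr K Γ} (hz : z ∈ wCycles w) : ∃ a ∈ terr z,
    (∀ δ ∈ terr z, ∃ i < orderOf z.top, (z.top ^ i) a = δ) ∧
    ∀ i j, i < orderOf z.top → j < orderOf z.top → (z.top ^ i) a = (z.top ^ j) a → i = j := by
  rcases wCycles_cases hz with ⟨c, hc, rfl⟩ | ⟨γ₀, hfix, hb, rfl⟩
  · have hcyc : c.IsCycle := (Equiv.Perm.mem_cycleFactorsFinset_iff.mp hc).1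
    obtain ⟨x, hx, hsc⟩ := id hcyc
    have hterr := terr_cycle (w := w) hc
    refine ⟨x, by rw [hterr]; simpa using hx, fun δ hδ => ?_, ?_⟩
    · rw [hterr] at hδ
      have hδ' : c δ ≠ δ := by simpa using hδ
      exact (hsc hδ').exists_pow_eq'
    · have aux : ∀ i j, i ≤ j → j < orderOf c → (c ^ i) x = (c ^ j) x → i = j := by
        intro i j hij hj heq
        have h1 : (c ^ i) ((c ^ (j - i)) x) = (c ^ i) x := by
          rw [← Equiv.Perm.mul_apply, ← pow_add, Nat.add_sub_cancel' hij]
          exact heq.symm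
        have h2 : (c ^ (j - i)) x = x := (c ^ i).injective h1
        have h3 : c ^ (j - i) = 1 := (Equiv.Perm.IsCycle.pow_eq_one_iff' hcyc hx).mpr h2
        have h4 : orderOf c ∣ (j - i) := orderOf_dvd_of_pow_eq_one h3
        have h5 : j - i = 0 := Nat.eq_zero_of_dvd_of_lt h4 (lt_of_le_of_lt (Nat.sub_le _ _) hj)
        omega
      intro i j hi hj heq
      rcases le_total i j with h | h
      · exact aux i j h hj heq
      · exact (aux j i h hi heq.symm).symm
  · refine ⟨γ₀, by rw [terr_single hb]; rfl, fun δ hδ => ?_, fun i j hi hj _ => ?_⟩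
    · rw [terr_single hb] at hδ
      rcases hδ with rfl
      exact ⟨0, by simp [orderOf_one], by simp⟩
    · simp only [orderOf_one] at hi hj
      omega

end Wr

theorem Equiv.Perm.apply_inv_self {α : Type*} (f : Equiv.Perm α) (x : α) : f (f⁻¹ x) = x :=
  f.apply_symm_apply x

theorem Equiv.Perm.inv_apply_self {α : Type*} (f : Equiv.Perm α) (x : α) : f⁻¹ (f x) = x :=
  f.symm_apply_apply x

namespace Wr

variable {K Γ : Type*} [Group K] [Fintype Γ] [DecidableEq Γ]

open Equiv Set

set_option linter.dupNamespace false

lemma conj_ne_one {G : Type*} [Group G] {a b : G} (h : b ≠ 1) : a * b * a⁻¹ ≠ 1 := by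
  intro hh
  apply h
  have := congrArg (fun x => a⁻¹ * x * a) hh
  simpa [mul_assoc] using this

lemma conj_top (s z : Wr K Γ) : (s * z * s⁻¹).top = s.top⁻¹ * z.top * s.top := by
  ext γ; rfl

lemma conj_base_apply (s z : Wr K Γ) (γ : Γ) :
    (s * z * s⁻¹).base γ
      = s.base γ * z.base (s.top γ) * (s.base (s.top⁻¹ (z.top (s.top γ))))⁻¹ := rfl

lemma conj_pow'' {G : Type*} [Group G] (a b : G) (n : ℕ) :
    (a⁻¹ * b * a) ^ n = a⁻¹ * b ^ n * a := by
  induction n with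
  | zero => group
  | succ n ih => rw [pow_succ, ih, pow_succ]; group

lemma orderOf_conj' {G : Type*} [Group G] (a b : G) :
    orderOf (a⁻¹ * b * a) = orderOf b := by
  have h : SemiconjBy a⁻¹ b (a⁻¹ * b * a) := by
    unfold SemiconjBy; group
  exact (h.orderOf_eq a⁻¹).symm

lemma conj_top_pow (s z : Wr K Γ) (i : ℕ) (γ : Γ) :
    ((s * z * s⁻¹).top ^ i) γ = s.top⁻¹ ((z.top ^ i) (s.top γ)) := by
  rw [conj_top, conj_pow'']
  rfl

lemma conj_orderOf_top (s z : Wr K Γ) : orderOf (s * z * s⁻¹).top = orderOf z.top := by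
  rw [conj_top, orderOf_conj']

lemma yade_conj (s z : Wr K Γ) (γ : Γ) :
    yade (s * z * s⁻¹) γ = s.base γ * yade z (s.top γ) * (s.base γ)⁻¹ := by
  have key : ∀ m, pp (s * z * s⁻¹) γ m
      = s.base γ * pp z (s.top γ) m * (s.base (s.top⁻¹ ((z.top ^ m) (s.top γ))))⁻¹ := by
    intro m
    induction m with
    | zero => simp [pp_zero]
    | succ m ih =>
        rw [pp_succ, ih, pp_succ]
        have h1 : (s * z * s⁻¹).base (((s * z * s⁻¹).top ^ m) γ)
            = s.base (s.top⁻¹ ((z.top ^ m) (s.top γ)))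
              * z.base ((z.top ^ m) (s.top γ))
              * (s.base (s.top⁻¹ ((z.top ^ (m + 1)) (s.top γ))))⁻¹ := by
          rw [conj_top_pow, conj_base_apply]
          rw [Equiv.Perm.apply_inv_self]
          rw [top_pow_succ]
        rw [h1]
        group
  rw [yade_eq_pp, yade_eq_pp, conj_orderOf_top, key, top_pow_orderOf,
    Equiv.Perm.inv_apply_self]

lemma terr_conj (s z : Wr K Γ) : terr (s * z * s⁻¹) = {γ | s.top γ ∈ terr z} := by
  ext γ
  have htop : (s * z * s⁻¹).top γ = s.top⁻¹ (z.top (s.top γ)) := rfl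
  by_cases h : z.top (s.top γ) = s.top γ
  · have h2 : (s * z * s⁻¹).top γ = γ := by rw [htop, h, Equiv.Perm.inv_apply_self]
    have h3 : (s * z * s⁻¹).base γ = s.base γ * z.base (s.top γ) * (s.base γ)⁻¹ := by
      rw [conj_base_apply, h, Equiv.Perm.inv_apply_self]
    simp only [terr, psupp, Set.mem_union, Set.mem_setOf_eq, h2, h, h3,
      not_true_eq_false, false_or]
    constructor
    · rintro (hb | hb)
      · exact absurd rfl hb
      · refine Or.inr fun hb1 => hb ?_
        rw [hb1]; group
    · rintro (hb | hb)
      · exact absurd rfl hb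
      · refine Or.inr (conj_ne_one hb)
  · have h2 : (s * z * s⁻¹).top γ ≠ γ := by
      rw [htop]
      intro hb
      apply h
      have := congrArg s.top hb
      rwa [Equiv.Perm.apply_inv_self] at this
    simp only [terr, psupp, Set.mem_union, Set.mem_setOf_eq]
    exact iff_of_true (Or.inl h2) (Or.inl h)

lemma load_conj (s z : Wr K Γ) : load (s * z * s⁻¹) = load z := by
  unfold load
  refine Prod.ext ?_ (conj_orderOf_top s z)
  ext x
  simp only [Set.mem_setOf_eq]
  constructor
  · rintro ⟨γ, hγ, hconj⟩
    rw [terr_conj] at hγ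
    refine ⟨s.top γ, hγ, IsConj.trans ?_ hconj⟩
    rw [yade_conj]
    exact isConj_iff.mpr ⟨s.base γ, rfl⟩
  · rintro ⟨δ, hδ, hconj⟩
    refine ⟨s.top⁻¹ δ, ?_, IsConj.trans ?_ hconj⟩
    · rw [terr_conj]
      simpa [Equiv.Perm.apply_inv_self] using hδ
    · rw [yade_conj, Equiv.Perm.apply_inv_self]
      exact (isConj_iff.mpr ⟨s.base (s.top⁻¹ δ), rfl⟩).symm

lemma mem_wCycles_conj (s : Wr K Γ) {w z : Wr K Γ} (hz : z ∈ wCycles w) :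
    s * z * s⁻¹ ∈ wCycles (s * w * s⁻¹) := by
  rcases wCycles_cases hz with ⟨c, hc, rfl⟩ | ⟨γ₀, hfix, hb, rfl⟩
  · left
    refine ⟨s.top⁻¹ * c * s.top, ?_, ?_⟩
    · have := (Equiv.Perm.mem_cycleFactorsFinset_conj w.top s.top⁻¹ c).mpr hc
      simpa [conj_top] using this
    · refine ext' (funext fun γ => ?_) ?_
      · rw [conj_base_apply]
        simp only
        have happ : (s.top⁻¹ * c * s.top) γ = s.top⁻¹ (c (s.top γ)) := rfl
        by_cases h : c (s.top γ) = s.top γ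
        · have hcond : ¬ (s.top⁻¹ * c * s.top) γ ≠ γ := by
            simp [happ, h, Equiv.Perm.inv_apply_self]
          rw [if_neg hcond, if_neg (not_not.mpr h), h, Equiv.Perm.inv_apply_self]
          group
        · have hcond : (s.top⁻¹ * c * s.top) γ ≠ γ := by
            rw [happ]
            intro hb
            apply h
            have := congrArg s.top hb
            rwa [Equiv.Perm.apply_inv_self] at this
          have hw : c (s.top γ) = w.top (s.top γ) :=
            (Equiv.Perm.mem_cycleFactorsFinset_iff.mp hc).2 (s.top γ)
              (Equiv.Perm.mem_support.mpr h)
          rw [if_pos hcond, if_pos h, conj_base_apply, hw]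
      · rw [conj_top]
  · right
    refine ⟨s.top⁻¹ γ₀, ?_, ?_, ?_⟩
    · show (s * w * s⁻¹).top (s.top⁻¹ γ₀) = s.top⁻¹ γ₀
      have : (s * w * s⁻¹).top (s.top⁻¹ γ₀) = s.top⁻¹ (w.top (s.top (s.top⁻¹ γ₀))) := rfl
      rw [this, Equiv.Perm.apply_inv_self, hfix]
    · rw [conj_base_apply, Equiv.Perm.apply_inv_self, hfix]
      exact conj_ne_one hb
    · refine ext' (funext fun γ => ?_) ?_
      · by_cases h : s.top γ = γ₀
        · have hγ : γ = s.top⁻¹ γ₀ := by rw [← h, Equiv.Perm.inv_apply_self]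
          simp [conj_base_apply, h, hγ, hfix, Equiv.Perm.apply_inv_self,
            Equiv.Perm.one_apply]
        · have hγ : γ ≠ s.top⁻¹ γ₀ := fun hh => h (by rw [hh, Equiv.Perm.apply_inv_self])
          simp [conj_base_apply, h, hγ, Equiv.Perm.one_apply, Equiv.Perm.inv_apply_self,
            show γ ≠ Equiv.symm s.top γ₀ from hγ]
      · rw [conj_top]
        ext γ; simp

lemma wCycles_conj (s w : Wr K Γ) :
    wCycles (s * w * s⁻¹) = (fun z => s * z * s⁻¹) '' wCycles w := by
  apply Set.Subset.antisymm
  · intro z' hz'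
    have h1 := mem_wCycles_conj s⁻¹ hz'
    rw [show s⁻¹ * (s * w * s⁻¹) * s⁻¹⁻¹ = w by group] at h1
    exact ⟨s⁻¹ * z' * s⁻¹⁻¹, h1, by group⟩
  · rintro _ ⟨z, hz, rfl⟩
    exact mem_wCycles_conj s hz

end Wr
namespace Wr

variable {K Γ : Type*} [Group K] [Fintype Γ] [DecidableEq Γ]

open Equiv Set

set_option linter.dupNamespace false

lemma forward_dir {w v : Wr K Γ} (h : IsConj w v) (L : Set K × ℕ) :
    {z ∈ wCycles w | load z = L}.ncard = {z ∈ wCycles v | load z = L}.ncard := by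
  obtain ⟨c, hc⟩ := isConj_iff.mp h
  have himg : {z ∈ wCycles v | load z = L}
      = (fun z => c * z * c⁻¹) '' {z ∈ wCycles w | load z = L} := by
    rw [← hc]
    ext z'
    constructor
    · rintro ⟨hz', hL⟩
      rw [wCycles_conj] at hz'
      obtain ⟨z, hz, rfl⟩ := hz'
      exact ⟨z, ⟨hz, by rwa [load_conj] at hL⟩, rfl⟩
    · rintro ⟨z, ⟨hz, hL⟩, rfl⟩
      refine ⟨?_, by rwa [load_conj]⟩
      rw [wCycles_conj]
      exact Set.mem_image_of_mem _ hz
  rw [himg]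
  exact (Set.ncard_image_of_injective _ fun a b hab =>
    mul_left_cancel (mul_right_cancel hab)).symm

lemma exists_bijOn_of_fiber_ncard {α ι : Type*} (f : α → ι) :
    ∀ (n : ℕ) (s t : Set α), s.Finite → t.Finite → s.ncard = n →
    (∀ i, {x ∈ s | f x = i}.ncard = {x ∈ t | f x = i}.ncard) →
    ∃ Φ, Set.BijOn Φ s t ∧ ∀ x ∈ s, f (Φ x) = f x := by
  classical
  intro n
  induction n with
  | zero =>
      intro s t hs ht hcard hfib
      have hs0 : s = ∅ := (Set.ncard_eq_zero hs).mp hcard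
      have ht0 : t = ∅ := by
        by_contra hne
        obtain ⟨y, hy⟩ := Set.nonempty_iff_ne_empty.mpr hne
        have h1 : 0 < {x ∈ t | f x = f y}.ncard :=
          (Set.ncard_pos (ht.subset (Set.sep_subset _ _))).mpr ⟨y, hy, rfl⟩
        rw [← hfib] at h1
        have h2 : {x ∈ s | f x = f y} ⊆ s := Set.sep_subset _ _
        have h3 : {x ∈ s | f x = f y}.ncard = 0 := by
          rw [hs0]
          simp
        omega
      subst hs0; subst ht0
      exact ⟨id, Set.bijOn_empty id, fun x hx => absurd hx (by simp)⟩
  | succ n ih =>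
      intro s t hs ht hcard hfib
      obtain ⟨x, hx⟩ : s.Nonempty := Set.nonempty_of_ncard_ne_zero (by omega)
      have hyt : 0 < {b ∈ t | f b = f x}.ncard := by
        rw [← hfib]
        exact (Set.ncard_pos (hs.subset (Set.sep_subset _ _))).mpr ⟨x, hx, rfl⟩
      obtain ⟨y, hy, hfy⟩ : ∃ y ∈ t, f y = f x := by
        obtain ⟨y, hy⟩ := Set.nonempty_of_ncard_ne_zero hyt.ne'
        exact ⟨y, hy.1, hy.2⟩
      have hfib' : ∀ i, {a ∈ s \ {x} | f a = i}.ncard = {b ∈ t \ {y} | f b = i}.ncard := by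
        intro i
        have e1 : {a ∈ s \ {x} | f a = i} = {a ∈ s | f a = i} \ {x} := by
          ext a; simp only [Set.mem_setOf_eq, Set.mem_diff, Set.mem_singleton_iff]; tauto
        have e2 : {b ∈ t \ {y} | f b = i} = {b ∈ t | f b = i} \ {y} := by
          ext b; simp only [Set.mem_setOf_eq, Set.mem_diff, Set.mem_singleton_iff]; tauto
        rw [e1, e2]
        by_cases hi : f x = i
        · have hxx : x ∈ {a ∈ s | f a = i} := ⟨hx, hi⟩
          have hyy : y ∈ {b ∈ t | f b = i} := ⟨hy, by rw [hfy, hi]⟩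
          rw [Set.ncard_diff_singleton_of_mem hxx,
            Set.ncard_diff_singleton_of_mem hyy, hfib]
        · have hx' : x ∉ {a ∈ s | f a = i} := fun hc => hi hc.2
          have hy' : y ∉ {b ∈ t | f b = i} := fun hc => hi (hfy ▸ hc.2)
          rw [Set.diff_singleton_eq_self hx', Set.diff_singleton_eq_self hy', hfib]
      have hcard' : (s \ {x}).ncard = n := by
        rw [Set.ncard_diff_singleton_of_mem hx, hcard]
        omega
      obtain ⟨Φ', hbij, hf⟩ := ih (s \ {x}) (t \ {y}) hs.diff ht.diff hcard' hfib'
      refine ⟨Function.update Φ' x y, ⟨?_, ?_, ?_⟩, ?_⟩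
      · intro a ha
        by_cases hax : a = x
        · subst hax; rw [Function.update_self]; exact hy
        · rw [Function.update_of_ne hax]
          exact (hbij.mapsTo ⟨ha, hax⟩).1
      · intro a ha b hb hab
        by_cases hax : a = x <;> by_cases hbx : b = x
        · rw [hax, hbx]
        · subst hax
          rw [Function.update_self, Function.update_of_ne hbx] at hab
          exact absurd hab.symm (hbij.mapsTo ⟨hb, hbx⟩).2
        · subst hbx
          rw [Function.update_self, Function.update_of_ne hax] at hab
          exact absurd hab (hbij.mapsTo ⟨ha, hax⟩).2
        · rw [Function.update_of_ne hax, Function.update_of_ne hbx] at hab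
          exact hbij.injOn ⟨ha, hax⟩ ⟨hb, hbx⟩ hab
      · intro b hb
        by_cases hby : b = y
        · exact ⟨x, hx, by rw [Function.update_self, hby]⟩
        · obtain ⟨a, ha, hab⟩ := hbij.surjOn ⟨hb, hby⟩
          exact ⟨a, ha.1, by rw [Function.update_of_ne ha.2, hab]⟩
      · intro a ha
        by_cases hax : a = x
        · subst hax; rw [Function.update_self, hfy]
        · rw [Function.update_of_ne hax]
          exact hf a ⟨ha, hax⟩

lemma gmap_mod {z ζ : Wr K Γ} {α' α : Γ} {u : K}
    (hn : orderOf ζ.top = orderOf z.top)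
    (hu : SemiconjBy u (yade ζ α) (yade z α')) :
    ∀ a b : ℕ, a % orderOf z.top = b % orderOf z.top →
      (pp z α' a)⁻¹ * u * pp ζ α a = (pp z α' b)⁻¹ * u * pp ζ α b := by
  have npos : 0 < orderOf z.top := orderOf_pos z.top
  have key : (yade z α')⁻¹ * u * yade ζ α = u := by
    have h := hu.eq
    rw [mul_assoc, h, ← mul_assoc, inv_mul_cancel, one_mul]
  have step : ∀ a, (pp z α' (a + orderOf z.top))⁻¹ * u * pp ζ α (a + orderOf z.top)
      = (pp z α' a)⁻¹ * u * pp ζ α a := by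
    intro a
    have h1 : pp ζ α (a + orderOf z.top) = yade ζ α * pp ζ α a := by
      rw [← hn, pp_add_orderOf]
    rw [pp_add_orderOf, h1, mul_inv_rev]
    calc (pp z α' a)⁻¹ * (yade z α')⁻¹ * u * (yade ζ α * pp ζ α a)
        = (pp z α' a)⁻¹ * ((yade z α')⁻¹ * u * yade ζ α) * pp ζ α a := by group
      _ = (pp z α' a)⁻¹ * u * pp ζ α a := by rw [key]
  have hmod : ∀ a, (pp z α' a)⁻¹ * u * pp ζ α a
      = (pp z α' (a % orderOf z.top))⁻¹ * u * pp ζ α (a % orderOf z.top) := by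
    intro a
    induction a using Nat.strong_induction_on with
    | _ a ihs =>
      by_cases h : a < orderOf z.top
      · rw [Nat.mod_eq_of_lt h]
      · push_neg at h
        have ha : a = (a - orderOf z.top) + orderOf z.top := by omega
        rw [ha, step, Nat.add_mod_right]
        exact ihs _ (by omega)
  intro a b hab
  rw [hmod a, hmod b, hab]

end Wr
namespace Wr

variable {K Γ : Type*} [Group K] [Fintype Γ] [DecidableEq Γ]

open Equiv Set

set_option linter.dupNamespace false
set_option maxHeartbeats 1000000

lemma top_mem_terr' {v : Wr K Γ} {γ : Γ} (h : γ ∈ terr v) : v.top γ ∈ terr v := by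
  obtain ⟨z', hz', hγ⟩ := exists_wCycle_of_mem_terr h
  have := (top_eq_on_terr hz' hγ).1
  rw [this]
  exact terr_subset_terr hz' (top_mem_terr hz' hγ)

lemma exists_conj_data {w v : Wr K Γ} {Ψ : Wr K Γ → Wr K Γ}
    (hmap : ∀ z' ∈ wCycles v, Ψ z' ∈ wCycles w)
    (hinj : Set.InjOn Ψ (wCycles v))
    (hload : ∀ z' ∈ wCycles v, load (Ψ z') = load z') :
    ∃ (σ₀ : Γ → Γ) (g : Γ → K), Set.MapsTo σ₀ (terr v) (terr w) ∧ Set.InjOn σ₀ (terr v) ∧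
      ∀ γ ∈ terr v, w.top (σ₀ γ) = σ₀ (v.top γ) ∧
        g γ * w.base (σ₀ γ) = v.base γ * g (v.top γ) := by
  classical
  rcases isEmpty_or_nonempty Γ with hE | hNE
  · exact ⟨id, fun _ => 1, fun γ _ => (hE.false γ).elim, fun γ _ => (hE.false γ).elim,
      fun γ _ => (hE.false γ).elim⟩
  -- choose the wreath cycle of v containing each territory point
  have hzv0 : ∀ γ : Γ, ∃ z', γ ∈ terr v → z' ∈ wCycles v ∧ γ ∈ terr z' := by
    intro γ
    by_cases h : γ ∈ terr v
    · obtain ⟨z', hz', ht⟩ := exists_wCycle_of_mem_terr h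
      exact ⟨z', fun _ => ⟨hz', ht⟩⟩
    · exact ⟨v, fun hc => absurd hc h⟩
  choose zv hzv using hzv0
  have huniq : ∀ (γ : Γ), γ ∈ terr v → ∀ z', z' ∈ wCycles v → γ ∈ terr z' → z' = zv γ := by
    intro γ h z' hz' hγ
    by_contra hne
    exact (Set.disjoint_left.mp (terr_disjoint hz' (hzv γ h).1 hne) hγ) (hzv γ h).2
  -- anchors for the wreath cycles of v
  have hA'0 : ∀ z' : Wr K Γ, ∃ a : Γ, z' ∈ wCycles v → a ∈ terr z' ∧
      (∀ δ ∈ terr z', ∃ i < orderOf z'.top, (z'.top ^ i) a = δ) ∧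
      (∀ i j, i < orderOf z'.top → j < orderOf z'.top →
        (z'.top ^ i) a = (z'.top ^ j) a → i = j) := by
    intro z'
    by_cases h : z' ∈ wCycles v
    · obtain ⟨a, h1, h2, h3⟩ := anchor h
      exact ⟨a, fun _ => ⟨h1, h2, h3⟩⟩
    · exact ⟨Classical.arbitrary Γ, fun hc => absurd hc h⟩
  choose A' hA' using hA'0
  -- anchors for the matched wreath cycles of w
  have hA0 : ∀ z' : Wr K Γ, ∃ a : Γ, z' ∈ wCycles v → a ∈ terr (Ψ z') ∧
      (∀ δ ∈ terr (Ψ z'), ∃ i < orderOf (Ψ z').top, ((Ψ z').top ^ i) a = δ) ∧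
      (∀ i j, i < orderOf (Ψ z').top → j < orderOf (Ψ z').top →
        ((Ψ z').top ^ i) a = ((Ψ z').top ^ j) a → i = j) := by
    intro z'
    by_cases h : z' ∈ wCycles v
    · obtain ⟨a, h1, h2, h3⟩ := anchor (hmap z' h)
      exact ⟨a, fun _ => ⟨h1, h2, h3⟩⟩
    · exact ⟨Classical.arbitrary Γ, fun hc => absurd hc h⟩
  choose A hA using hA0
  have hord : ∀ z' ∈ wCycles v, orderOf (Ψ z').top = orderOf z'.top := by
    intro z' h
    exact congrArg Prod.snd (hload z' h)
  -- the conjugating elements between matched yades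
  have hu0 : ∀ z' : Wr K Γ, ∃ uu : K, z' ∈ wCycles v →
      SemiconjBy uu (yade (Ψ z') (A z')) (yade z' (A' z')) := by
    intro z'
    by_cases h : z' ∈ wCycles v
    · have hcls : (load (Ψ z')).1 = (load z').1 := congrArg Prod.fst (hload z' h)
      have hmem : yade z' (A' z') ∈ (load z').1 :=
        ⟨A' z', (hA' z' h).1, IsConj.refl _⟩
      rw [← hcls] at hmem
      obtain ⟨δ, hδ, hconj⟩ := hmem
      obtain ⟨i, hi, hie⟩ := (hA z' h).2.1 δ hδ
      have hconj2 : IsConj (yade (Ψ z') (A z')) (yade z' (A' z')) := by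
        refine IsConj.trans ?_ hconj
        rw [← hie]
        exact isConj_yade_pow _ _ _
      obtain ⟨c, hc⟩ := isConj_iff.mp hconj2
      refine ⟨c, fun _ => ?_⟩
      unfold SemiconjBy
      rw [← hc]; group
    · exact ⟨1, fun hc => absurd hc h⟩
  choose u hu using hu0
  -- indices of points in the territory w.r.t. the anchor
  have hidx0 : ∀ (z' : Wr K Γ) (δ : Γ), ∃ i : ℕ, z' ∈ wCycles v → δ ∈ terr z' →
      i < orderOf z'.top ∧ (z'.top ^ i) (A' z') = δ := by
    intro z' δ
    by_cases h : z' ∈ wCycles v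
    · by_cases hδ : δ ∈ terr z'
      · obtain ⟨i, hi, hie⟩ := (hA' z' h).2.1 δ hδ
        exact ⟨i, fun _ _ => ⟨hi, hie⟩⟩
      · exact ⟨0, fun _ hc => absurd hc hδ⟩
    · exact ⟨0, fun hc => absurd hc h⟩
  choose idx hidx using hidx0
  refine ⟨fun γ => if γ ∈ terr v then ((Ψ (zv γ)).top ^ (idx (zv γ) γ)) (A (zv γ)) else γ,
    fun γ => if γ ∈ terr v then
      (pp (zv γ) (A' (zv γ)) (idx (zv γ) γ))⁻¹ * u (zv γ)
        * pp (Ψ (zv γ)) (A (zv γ)) (idx (zv γ) γ)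
    else 1, ?_, ?_, ?_⟩
  · -- MapsTo
    intro γ h
    simp only [if_pos h]
    exact terr_subset_terr (hmap _ (hzv γ h).1)
      (top_pow_mem_terr (hmap _ (hzv γ h).1) (hA _ (hzv γ h).1).1 _)
  · -- InjOn
    intro γ₁ h₁ γ₂ h₂ heq
    simp only [if_pos h₁, if_pos h₂] at heq
    by_cases hzz : zv γ₁ = zv γ₂
    · rw [hzz] at heq
      have hb₁ := hidx (zv γ₁) γ₁ (hzv γ₁ h₁).1 (hzv γ₁ h₁).2
      have hb₂ := hidx (zv γ₂) γ₂ (hzv γ₂ h₂).1 (hzv γ₂ h₂).2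
      have hii : idx (zv γ₁) γ₁ = idx (zv γ₂) γ₂ := by
        apply (hA (zv γ₂) (hzv γ₂ h₂).1).2.2
        · rw [hord _ (hzv γ₂ h₂).1, ← hzz]; exact hb₁.1
        · rw [hord _ (hzv γ₂ h₂).1]; exact hb₂.1
        · rw [← hzz] at heq ⊢; exact heq
      rw [← hb₁.2, ← hb₂.2, ← hzz, hii, hzz]
    · exfalso
      have hne : Ψ (zv γ₁) ≠ Ψ (zv γ₂) := fun hc =>
        hzz (hinj (hzv γ₁ h₁).1 (hzv γ₂ h₂).1 hc)
      have hdisj := terr_disjoint (hmap _ (hzv γ₁ h₁).1) (hmap _ (hzv γ₂ h₂).1) hne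
      have hm₁ : ((Ψ (zv γ₁)).top ^ (idx (zv γ₁) γ₁)) (A (zv γ₁)) ∈ terr (Ψ (zv γ₁)) :=
        top_pow_mem_terr (hmap _ (hzv γ₁ h₁).1) (hA _ (hzv γ₁ h₁).1).1 _
      have hm₂ : ((Ψ (zv γ₂)).top ^ (idx (zv γ₂) γ₂)) (A (zv γ₂)) ∈ terr (Ψ (zv γ₂)) :=
        top_pow_mem_terr (hmap _ (hzv γ₂ h₂).1) (hA _ (hzv γ₂ h₂).1).1 _
      rw [heq] at hm₁
      exact (Set.disjoint_left.mp hdisj hm₁) hm₂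
  · -- the equations
    intro γ h
    have hz' : zv γ ∈ wCycles v := (hzv γ h).1
    have hγz : γ ∈ terr (zv γ) := (hzv γ h).2
    have hvt : v.top γ = (zv γ).top γ := (top_eq_on_terr hz' hγz).1
    have hvb : v.base γ = (zv γ).base γ := (top_eq_on_terr hz' hγz).2
    have htv : v.top γ ∈ terr (zv γ) := by rw [hvt]; exact top_mem_terr hz' hγz
    have hvmem : v.top γ ∈ terr v := terr_subset_terr hz' htv
    have hzvt : zv (v.top γ) = zv γ := (huniq (v.top γ) hvmem (zv γ) hz' htv).symm
    have hi := hidx (zv γ) γ hz' hγz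
    have hj := hidx (zv γ) (v.top γ) hz' htv
    have npos : 0 < orderOf (zv γ).top := orderOf_pos (zv γ).top
    -- the index congruence
    have hmod : idx (zv γ) (v.top γ) % orderOf (zv γ).top
        = (idx (zv γ) γ + 1) % orderOf (zv γ).top := by
      apply (hA' (zv γ) hz').2.2
      · exact Nat.mod_lt _ npos
      · exact Nat.mod_lt _ npos
      · rw [top_pow_mod, top_pow_mod, hj.2, top_pow_succ, hi.2, ← hvt]
    have hσmem : ((Ψ (zv γ)).top ^ (idx (zv γ) γ)) (A (zv γ)) ∈ terr (Ψ (zv γ)) :=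
      top_pow_mem_terr (hmap _ hz') (hA _ hz').1 _
    constructor
    · -- top equation
      simp only [if_pos h, if_pos hvmem]
      rw [hzvt]
      rw [(top_eq_on_terr (hmap _ hz') hσmem).1, ← top_pow_succ]
      have e1 : ((Ψ (zv γ)).top ^ (idx (zv γ) γ + 1)) (A (zv γ))
          = ((Ψ (zv γ)).top ^ ((idx (zv γ) γ + 1) % orderOf (Ψ (zv γ)).top)) (A (zv γ)) :=
        (top_pow_mod _ _ _).symm
      have e2 : ((Ψ (zv γ)).top ^ (idx (zv γ) (v.top γ))) (A (zv γ))
          = ((Ψ (zv γ)).top ^ ((idx (zv γ) (v.top γ)) % orderOf (Ψ (zv γ)).top)) (A (zv γ)) :=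
        (top_pow_mod _ _ _).symm
      rw [e1, e2, hord _ hz', hmod]
    · -- base equation
      simp only [if_pos h, if_pos hvmem]
      rw [hzvt]
      have hwb : w.base (((Ψ (zv γ)).top ^ (idx (zv γ) γ)) (A (zv γ)))
          = (Ψ (zv γ)).base (((Ψ (zv γ)).top ^ (idx (zv γ) γ)) (A (zv γ))) :=
        (top_eq_on_terr (hmap _ hz') hσmem).2
      have hvb2 : v.base γ = (zv γ).base (((zv γ).top ^ (idx (zv γ) γ)) (A' (zv γ))) := by
        rw [hi.2, ← hvb]
      have hG : (pp (zv γ) (A' (zv γ)) (idx (zv γ) (v.top γ)))⁻¹ * u (zv γ)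
            * pp (Ψ (zv γ)) (A (zv γ)) (idx (zv γ) (v.top γ))
          = (pp (zv γ) (A' (zv γ)) (idx (zv γ) γ + 1))⁻¹ * u (zv γ)
            * pp (Ψ (zv γ)) (A (zv γ)) (idx (zv γ) γ + 1) :=
        gmap_mod (hord _ hz') (hu _ hz') _ _ hmod
      rw [hwb, hvb2, hG, pp_succ, pp_succ]
      group

theorem isConj_of_card_loads {w v : Wr K Γ}
    (H : ∀ L : Set K × ℕ,
      {z ∈ wCycles w | load z = L}.ncard = {z ∈ wCycles v | load z = L}.ncard) :
    IsConj w v := by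
  classical
  obtain ⟨Ψ, hΨbij, hΨload⟩ := exists_bijOn_of_fiber_ncard load (wCycles v).ncard
    (wCycles v) (wCycles w) (wCycles_finite v) (wCycles_finite w) rfl
    (fun L => (H L).symm)
  obtain ⟨Φ, hΦbij, hΦload⟩ := exists_bijOn_of_fiber_ncard load (wCycles w).ncard
    (wCycles w) (wCycles v) (wCycles_finite w) (wCycles_finite v) rfl H
  obtain ⟨σ₀, g, hσmaps, hσinj, hσeq⟩ := exists_conj_data (w := w) (v := v)
    hΨbij.mapsTo hΨbij.injOn hΨload
  obtain ⟨τ₀, g', hτmaps, hτinj, _⟩ := exists_conj_data (w := v) (v := w)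
    hΦbij.mapsTo hΦbij.injOn hΦload
  have hle1 : (terr v).ncard ≤ (terr w).ncard := by
    rw [← Set.ncard_image_of_injOn hσinj]
    exact Set.ncard_le_ncard hσmaps.image_subset (Set.toFinite _)
  have hle2 : (terr w).ncard ≤ (terr v).ncard := by
    rw [← Set.ncard_image_of_injOn hτinj]
    exact Set.ncard_le_ncard hτmaps.image_subset (Set.toFinite _)
  have hterr : (terr v).ncard = (terr w).ncard := le_antisymm hle1 hle2
  have hcompl : ((terr v)ᶜ).ncard = ((terr w)ᶜ).ncard := by
    have h1 := Set.ncard_add_ncard_compl (terr v)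
    have h2 := Set.ncard_add_ncard_compl (terr w)
    omega
  have hcard : Nat.card ↥((terr v)ᶜ) = Nat.card ↥((terr w)ᶜ) := by
    rw [Nat.card_coe_set_eq, Nat.card_coe_set_eq, hcompl]
  obtain ⟨e⟩ := Finite.card_eq.mp hcard
  set σf : Γ → Γ := fun γ => if h : γ ∈ terr v then σ₀ γ else (e ⟨γ, h⟩ : Γ) with hσf
  have hσfinj : Function.Injective σf := by
    intro γ₁ γ₂ heq
    rw [hσf] at heq
    simp only at heq
    by_cases h₁ : γ₁ ∈ terr v <;> by_cases h₂ : γ₂ ∈ terr v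
    · rw [dif_pos h₁, dif_pos h₂] at heq
      exact hσinj h₁ h₂ heq
    · rw [dif_pos h₁, dif_neg h₂] at heq
      exact absurd (heq ▸ hσmaps h₁) (e ⟨γ₂, h₂⟩).2
    · rw [dif_neg h₁, dif_pos h₂] at heq
      exact absurd (heq ▸ hσmaps h₂) ((e ⟨γ₁, h₁⟩).2)
    · rw [dif_neg h₁, dif_neg h₂] at heq
      have := e.injective (Subtype.coe_injective heq)
      exact congrArg Subtype.val this
  have hσfbij : Function.Bijective σf := Finite.injective_iff_bijective.mp hσfinj
  refine (isConj_iff' w v).mpr ⟨Equiv.ofBijective σf hσfbij,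
    fun γ => if γ ∈ terr v then g γ else 1, ?_, ?_⟩
  · intro γ
    have hσγ : (Equiv.ofBijective σf hσfbij) γ = σf γ := rfl
    by_cases h : γ ∈ terr v
    · have hvmem : v.top γ ∈ terr v := top_mem_terr' h
      rw [hσγ, show (Equiv.ofBijective σf hσfbij) (v.top γ) = σf (v.top γ) from rfl]
      rw [hσf]
      simp only
      rw [dif_pos h, dif_pos hvmem]
      exact (hσeq γ h).1
    · have hfix := top_fix_of_not_mem_terr h
      rw [hσγ, show (Equiv.ofBijective σf hσfbij) (v.top γ) = σf (v.top γ) from rfl,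
        hfix.1]
      have hσout : σf γ ∉ terr w := by
        rw [hσf]; simp only; rw [dif_neg h]
        exact (e ⟨γ, h⟩).2
      exact (top_fix_of_not_mem_terr hσout).1
  · intro γ
    by_cases h : γ ∈ terr v
    · have hvmem : v.top γ ∈ terr v := top_mem_terr' h
      have hσγ : (Equiv.ofBijective σf hσfbij) γ = σ₀ γ := by
        show σf γ = σ₀ γ
        rw [hσf]; simp only; rw [dif_pos h]
      rw [hσγ]
      beta_reduce
      rw [if_pos h, if_pos hvmem]
      exact (hσeq γ h).2
    · have hfix := top_fix_of_not_mem_terr h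
      have hσγ : (Equiv.ofBijective σf hσfbij) γ = σf γ := rfl
      have hσout : σf γ ∉ terr w := by
        rw [hσf]; simp only; rw [dif_neg h]
        exact (e ⟨γ, h⟩).2
      rw [hσγ, (top_fix_of_not_mem_terr hσout).2, hfix.1, hfix.2]
      beta_reduce
      rw [if_neg h]

end Wr

/-- `w, v` are conjugate in `S = K ≀_Γ Sym(Γ)` iff for every load `L`
they have the same number of wreath cycles of load `L`. -/
theorem isConj_iff_card_loads {K Γ : Type*} [Group K] [Fintype Γ] [DecidableEq Γ]
    (w v : Wr K Γ) :
    IsConj w v ↔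
      ∀ L : Set K × ℕ,
        {z ∈ wCycles w | load z = L}.ncard = {z ∈ wCycles v | load z = L}.ncard := by
  constructor
  · intro h L
    exact Wr.forward_dir h L
  · exact Wr.isConj_of_card_loads
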